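/- Let u : ℕ → ℚ be a sequence, and let p, q ∈ ℚ[X] be nonzero polynomials each of which is a characteristic polynomial for u from some index (say from N₁ and N₂ respectively). Then there exists an index N such that gcd(p, q) is a characteristic polynomial for u from index N. -/

import Mathlib

/-- `p` is a characteristic polynomial for the sequence `u` from index `N`:
for every `m ≥ N`, `∑_{i=0}^{deg p} (coeff of x^i in p) * u (m + i) = 0`. -/
def IsCharPoly (u : ℕ → ℚ) (p : Polynomial ℚ) (N : ℕ) : Prop :=
  ∀ m, N ≤ m → ∑ i ∈ Finset.range (p.natDegree + 1), p.coeff i * u (m + i) = 0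

noncomputable def Sfun (u : ℕ → ℚ) (f : Polynomial ℚ) (m : ℕ) : ℚ :=
  f.sum (fun i c => c * u (m + i))

lemma Sfun_add (u : ℕ → ℚ) (f g : Polynomial ℚ) (m : ℕ) :
    Sfun u (f + g) m = Sfun u f m + Sfun u g m :=
  Polynomial.sum_add_index f g _ (fun i => zero_mul _) (fun i b c => add_mul _ _ _)

lemma Sfun_monomial (u : ℕ → ℚ) (n : ℕ) (a : ℚ) (m : ℕ) :
    Sfun u (Polynomial.monomial n a) m = a * u (m + n) :=
  Polynomial.sum_monomial_index a _ (zero_mul _)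

lemma Sfun_monomial_mul (u : ℕ → ℚ) (n : ℕ) (a : ℚ) (f : Polynomial ℚ) (m : ℕ) :
    Sfun u (Polynomial.monomial n a * f) m = a * Sfun u f (m + n) := by
  induction f using Polynomial.induction_on' with
  | add g h hg hh =>
      rw [mul_add, Sfun_add, Sfun_add, hg, hh, mul_add]
  | monomial k c =>
      rw [Polynomial.monomial_mul_monomial, Sfun_monomial, Sfun_monomial]
      ring_nf

lemma Sfun_mul_eq_zero (u : ℕ → ℚ) (f : Polynomial ℚ) (N : ℕ)
    (hf : ∀ m, N ≤ m → Sfun u f m = 0) (r : Polynomial ℚ) :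
    ∀ m, N ≤ m → Sfun u (r * f) m = 0 := by
  induction r using Polynomial.induction_on' with
  | add g h hg hh =>
      intro m hm
      rw [add_mul, Sfun_add, hg m hm, hh m hm, add_zero]
  | monomial k c =>
      intro m hm
      rw [Sfun_monomial_mul, hf (m + k) (le_trans hm (Nat.le_add_right _ _)), mul_zero]

lemma Sfun_eq_sum (u : ℕ → ℚ) (f : Polynomial ℚ) (m : ℕ) :
    Sfun u f m = ∑ i ∈ Finset.range (f.natDegree + 1), f.coeff i * u (m + i) :=
  Polynomial.sum_over_range f (fun n => zero_mul _)

theorem charPoly_gcd (u : ℕ → ℚ) (p q : Polynomial ℚ) (hp0 : p ≠ 0) (hq0 : q ≠ 0)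
    (N₁ N₂ : ℕ) (hp : IsCharPoly u p N₁) (hq : IsCharPoly u q N₂) :
    ∃ N : ℕ, IsCharPoly u (gcd p q) N := by
  obtain ⟨a, b, hab⟩ := exists_gcd_eq_mul_add_mul p q
  refine ⟨max N₁ N₂, fun m hm => ?_⟩
  have hp' : ∀ m, N₁ ≤ m → Sfun u p m = 0 := by
    intro m hm; rw [Sfun_eq_sum]; exact hp m hm
  have hq' : ∀ m, N₂ ≤ m → Sfun u q m = 0 := by
    intro m hm; rw [Sfun_eq_sum]; exact hq m hm
  have := Sfun_mul_eq_zero u p N₁ hp' a m (le_trans (le_max_left _ _) hm)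
  have h2 := Sfun_mul_eq_zero u q N₂ hq' b m (le_trans (le_max_right _ _) hm)
  rw [← Sfun_eq_sum, hab, Sfun_add, mul_comm p a, mul_comm q b, this, h2, add_zero]
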